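/- arXiv:1810.06781 — 4 statements merged into one kernel-verified Lean document; each statement's English description precedes it below -/
import Mathlib

section
/- Let ξ be a complex number, let X_1,…,X_n be complex numbers, and let C_1, C_2, k_Lip be positive reals such that: (i) C_1 ≤ |(1/n)∑_{j=1}^n 1/(ξ−X_j)| ≤ C_2; (ii) the function z ↦ (1/n)∑_{j=1}^n 1/(z−X_j) is Lipschitz continuous with constant k_Lip on the set {z ∈ ℂ : |z−ξ| ≤ 2/(C_1 n)}; (iii) min_{1≤j≤n} |ξ−X_j| > 3/(C_1 n). Then for any real C > 8(1+2C_2²)/C_1³ and any natural number n > 4C_2·max{1/C_1, C(k_Lip+1)}, the polynomial p_n(z) := (z−ξ)∏_{j=1}^n (z−X_j) has exactly one critical point w (i.e. zero of p_n′) with |w−ξ| ≤ 3/(2C_1 n), and this w satisfies |w − ξ + (1/(n+1)) · 1/((1/n)∑_{j=1}^n 1/(ξ−X_j))| < C(k_Lip+1)/n². -/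
open Polynomial Finset in
lemma finset_derivative_prod {ι : Type*} [DecidableEq ι] (s : Finset ι) (f : ι → Polynomial ℂ) :
    Polynomial.derivative (∏ i ∈ s, f i)
      = ∑ i ∈ s, (∏ j ∈ s.erase i, f j) * Polynomial.derivative (f i) := by
  classical
  induction s using Finset.induction_on with
  | empty => simp
  | insert a t hx ih =>
    rw [Finset.prod_insert hx, derivative_mul, ih, Finset.sum_insert hx,
      Finset.erase_insert hx, Finset.mul_sum]
    congr 1
    · ring
    refine Finset.sum_congr rfl fun j hj => ?_
    rw [Finset.erase_insert_of_ne (by rintro rfl; exact hx hj),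
      Finset.prod_insert (fun h => hx (Finset.mem_of_mem_erase h))]
    ring

open Polynomial Finset in
lemma deriv_eval_aux (n : ℕ) (ξ : ℂ) (Xs : Fin n → ℂ) (w : ℂ) (hw : ∀ j, w - Xs j ≠ 0) :
    (Polynomial.derivative ((Polynomial.X - Polynomial.C ξ) *
        ∏ j, (Polynomial.X - Polynomial.C (Xs j)))).eval w
      = (∏ j, (w - Xs j)) * (1 + (w - ξ) * ∑ j, (w - Xs j)⁻¹) := by
  rw [derivative_mul, finset_derivative_prod]
  simp only [derivative_sub, derivative_X, derivative_C, sub_zero, mul_one]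
  simp only [eval_add, eval_mul, eval_one, one_mul, eval_prod, eval_finset_sum,
    eval_sub, eval_X, eval_C]
  have key : (∑ j, ∏ i ∈ Finset.univ.erase j, (w - Xs i))
      = (∏ j, (w - Xs j)) * ∑ j, (w - Xs j)⁻¹ := by
    rw [Finset.mul_sum]
    refine Finset.sum_congr rfl fun j _ => ?_
    rw [← Finset.mul_prod_erase Finset.univ _ (Finset.mem_univ j),
      mul_comm (w - Xs j), mul_inv_cancel_right₀ (hw j)]
  rw [key]; ring

lemma alg1_aux (ξ nz sz sw : ℂ) (hn : nz ≠ 0) (hz : sz ≠ 0) (hw : sw ≠ 0) :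
    (ξ - (nz * sz)⁻¹) - (ξ - (nz * sw)⁻¹) = (sz - sw) * (nz * sz * sw)⁻¹ := by
  field_simp
  ring

lemma alg2_aux (ξ w nn sz sw : ℂ) (hn : nn ≠ 0) (h1 : nn + 1 ≠ 0) (hz : sz ≠ 0) (hw : sw ≠ 0)
    (hfix : w - ξ = -(nn * sw)⁻¹) :
    w - ξ + (nn + 1)⁻¹ * sz⁻¹ = (nn * (sw - sz) - sz) * ((nn * (nn + 1)) * (sz * sw))⁻¹ := by
  rw [hfix]
  field_simp
  ring

set_option maxHeartbeats 2000000 in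
/-- Theorem `detLoc`: deterministic location of the unique critical point
near a root `ξ` of `p n (z) = (z - ξ) ∏ j, (z - Xs j)`. -/
theorem critical_point_near_deterministic_root
    (n : ℕ) (ξ : ℂ) (Xs : Fin n → ℂ) (C₁ C₂ kLip C : ℝ)
    (hC₁ : 0 < C₁) (hC₂ : 0 < C₂) (hk : 0 < kLip)
    (hlow : C₁ ≤ ‖(n : ℂ)⁻¹ * ∑ j, (ξ - Xs j)⁻¹‖)
    (hupp : ‖(n : ℂ)⁻¹ * ∑ j, (ξ - Xs j)⁻¹‖ ≤ C₂)
    (hLip : LipschitzOnWith (Real.toNNReal kLip)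
      (fun z : ℂ => (n : ℂ)⁻¹ * ∑ j, (z - Xs j)⁻¹)
      {z : ℂ | ‖z - ξ‖ ≤ 2 / (C₁ * n)})
    (hmin : ∀ j, 3 / (C₁ * n) < ‖ξ - Xs j‖)
    (hC : 8 * (1 + 2 * C₂ ^ 2) / C₁ ^ 3 < C)
    (hn : 4 * C₂ * max (1 / C₁) (C * (kLip + 1)) < (n : ℝ)) :
    ∃ w : ℂ,
      ‖w - ξ‖ ≤ 3 / (2 * C₁ * n) ∧
      (Polynomial.derivative
        ((Polynomial.X - Polynomial.C ξ) *
          ∏ j, (Polynomial.X - Polynomial.C (Xs j)))).IsRoot w ∧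
      (∀ w' : ℂ, ‖w' - ξ‖ ≤ 3 / (2 * C₁ * n) →
        (Polynomial.derivative
          ((Polynomial.X - Polynomial.C ξ) *
            ∏ j, (Polynomial.X - Polynomial.C (Xs j)))).IsRoot w' → w' = w) ∧
      ‖w - ξ + ((n : ℂ) + 1)⁻¹ * ((n : ℂ)⁻¹ * ∑ j, (ξ - Xs j)⁻¹)⁻¹‖
        < C * (kLip + 1) / (n : ℝ) ^ 2 := by
  classical
  obtain ⟨σ, hσdef⟩ : ∃ σ : ℂ → ℂ, σ = fun z : ℂ => (n : ℂ)⁻¹ * ∑ j, (z - Xs j)⁻¹ :=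
    ⟨_, rfl⟩
  have hσz' : ∀ z : ℂ, σ z = (n : ℂ)⁻¹ * ∑ j, (z - Xs j)⁻¹ := fun z => by rw [hσdef]
  rw [← hσz' ξ] at hlow hupp
  rw [← hσz' ξ]
  rw [← hσdef] at hLip
  -- basic positivity facts
  have hC0 : 0 < C := lt_trans (by positivity) hC
  have hC12 : C₁ ≤ C₂ := hlow.trans hupp
  have hn4 : (4 : ℝ) < n := by
    have h1 : 4 * C₂ * (1 / C₁) ≤ 4 * C₂ * max (1 / C₁) (C * (kLip + 1)) :=
      mul_le_mul_of_nonneg_left (le_max_left _ _) (by positivity)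
    have h2 : (4 : ℝ) ≤ 4 * C₂ * (1 / C₁) := by
      rw [mul_one_div, le_div_iff₀ hC₁]; nlinarith
    linarith
  have hn0 : (0 : ℝ) < n := by linarith
  have hnne : (n : ℂ) ≠ 0 := by
    simp only [ne_eq, Nat.cast_eq_zero]
    intro h; rw [h] at hn0; norm_num at hn0
  have hCC : 8 * (1 + 2 * C₂ ^ 2) < C * C₁ ^ 3 := by
    rwa [div_lt_iff₀ (by positivity)] at hC
  have hnk : 32 * kLip < (n : ℝ) * C₁ ^ 2 := by
    have h2 : 4 * C₂ * (C * (kLip + 1)) < n :=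
      lt_of_le_of_lt (mul_le_mul_of_nonneg_left (le_max_right _ _) (by positivity)) hn
    have e1 : 4 * (C * C₁ ^ 3) * (kLip + 1) ≤ 4 * C₂ * (C * (kLip + 1)) * C₁ ^ 2 := by
      nlinarith [mul_nonneg (mul_nonneg (mul_nonneg hC0.le
        (by linarith : (0:ℝ) ≤ kLip + 1)) (sq_nonneg C₁)) (sub_nonneg.2 hC12)]
    have e2 : 32 * (kLip + 1) < 4 * (C * C₁ ^ 3) * (kLip + 1) := by
      nlinarith [sq_nonneg C₂]
    have e3 : 4 * C₂ * (C * (kLip + 1)) * C₁ ^ 2 < (n : ℝ) * C₁ ^ 2 :=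
      mul_lt_mul_of_pos_right h2 (pow_pos hC₁ 2)
    linarith
  -- the closed ball
  set r : ℝ := 3 / (2 * C₁ * n) with hrdef
  have hr0 : 0 < r := by rw [hrdef]; positivity
  set Kb : Set ℂ := Metric.closedBall ξ r with hKbdef
  have hmemiff : ∀ z : ℂ, z ∈ Kb ↔ ‖z - ξ‖ ≤ r := by
    intro z; rw [hKbdef, Metric.mem_closedBall, Complex.dist_eq]
  have hrle : r ≤ 2 / (C₁ * n) := by
    rw [hrdef, div_le_div_iff₀ (by positivity) (by positivity)]
    nlinarith [mul_pos hC₁ hn0]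
  have hset : ∀ z ∈ Kb, z ∈ {z : ℂ | ‖z - ξ‖ ≤ 2 / (C₁ * n)} := by
    intro z hz
    exact le_trans ((hmemiff z).1 hz) hrle
  have hxiK : ξ ∈ Kb := by
    rw [hmemiff]; simpa using hr0.le
  have hL : ∀ z ∈ Kb, ∀ w ∈ Kb,
      ‖σ z - σ w‖ ≤ kLip * ‖z - w‖ := by
    intro z hz w hw
    have := hLip.dist_le_mul z (hset z hz) w (hset w hw)
    rwa [Complex.dist_eq, Complex.dist_eq, Real.coe_toNNReal _ hk.le] at this
  have hkr : kLip * r ≤ C₁ / 4 := by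
    rw [hrdef, ← mul_div_assoc, div_le_div_iff₀ (by positivity) (by norm_num)]
    nlinarith [mul_pos hC₁ hn0, mul_le_mul_of_nonneg_left hnk.le hC₁.le]
  have hσlow : ∀ z ∈ Kb, 3 * C₁ / 4 ≤ ‖σ z‖ := by
    intro z hz
    have h1 := hL ξ hxiK z hz
    have h2 : ‖ξ - z‖ ≤ r := by
      rw [norm_sub_rev]
      exact (hmemiff z).1 hz
    have h3 : ‖σ ξ‖ ≤ ‖σ z‖ + ‖σ ξ - σ z‖ := by
      calc ‖σ ξ‖ = ‖σ z + (σ ξ - σ z)‖ := by ring_nf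
        _ ≤ _ := norm_add_le _ _
    have h4 : kLip * ‖ξ - z‖ ≤ kLip * r :=
      mul_le_mul_of_nonneg_left h2 hk.le
    linarith
  have hσne : ∀ z ∈ Kb, σ z ≠ 0 := by
    intro z hz h
    have := hσlow z hz
    rw [h, norm_zero] at this
    nlinarith
  -- the fixed point map
  obtain ⟨T, hTdef⟩ : ∃ T : ℂ → ℂ, T = fun z => ξ - ((n : ℂ) * σ z)⁻¹ := ⟨_, rfl⟩
  have hTz : ∀ z : ℂ, T z = ξ - ((n : ℂ) * σ z)⁻¹ := fun z => by rw [hTdef]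
  have hT : ∀ z ∈ Kb, ‖T z - ξ‖ ≤ 4 / (3 * C₁ * n) := by
    intro z hz
    have h1 : T z - ξ = -((n : ℂ) * σ z)⁻¹ := by rw [hTz z]; ring
    have hpos : (0 : ℝ) < (n : ℝ) * ‖σ z‖ := by
      nlinarith [hσlow z hz]
    rw [h1, norm_neg, norm_inv, norm_mul, Complex.norm_natCast,
      inv_eq_one_div, div_le_div_iff₀ hpos (by positivity)]
    nlinarith [mul_le_mul_of_nonneg_left (hσlow z hz) (show (0:ℝ) ≤ 4 * (n:ℝ) by positivity)]
  have hmaps : Set.MapsTo T Kb Kb := by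
    intro z hz
    rw [hmemiff]
    refine (hT z hz).trans ?_
    rw [hrdef, div_le_div_iff₀ (by positivity) (by positivity)]
    nlinarith [mul_pos hC₁ hn0]
  have hhalf : ∀ z ∈ Kb, ∀ w ∈ Kb,
      ‖T z - T w‖ ≤ (1 / 2) * ‖z - w‖ := by
    intro z hz w hw
    have hσz := hσne z hz
    have hσw := hσne w hw
    have key : T z - T w = (σ z - σ w) * ((n : ℂ) * σ z * σ w)⁻¹ := by
      rw [hTz z, hTz w]
      exact alg1_aux ξ (n : ℂ) (σ z) (σ w) hnne hσz hσw
    rw [key, norm_mul, norm_inv, norm_mul, norm_mul, Complex.norm_natCast]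
    have h1 := hL z hz w hw
    have h2 := hσlow z hz
    have h3 := hσlow w hw
    have hA : (0 : ℝ) ≤ ‖z - w‖ := norm_nonneg _
    have hden : (0 : ℝ) < (n : ℝ) * ‖σ z‖ * ‖σ w‖ :=
      mul_pos (mul_pos hn0 (lt_of_lt_of_le (by positivity) h2))
        (lt_of_lt_of_le (by positivity) h3)
    rw [← div_eq_mul_inv, div_le_iff₀ hden]
    nlinarith [mul_le_mul_of_nonneg_right hnk.le hA,
      mul_le_mul_of_nonneg_left
        (mul_le_mul h2 h3 (by positivity) (norm_nonneg _))
        (mul_nonneg hn0.le hA)]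
  -- Banach fixed point
  have hLipT : LipschitzOnWith (1 / 2 : NNReal) T Kb := by
    apply LipschitzOnWith.of_dist_le_mul
    intro x hx y hy
    rw [Complex.dist_eq, Complex.dist_eq]
    have hc : ((1 / 2 : NNReal) : ℝ) = 1 / 2 := by norm_num
    rw [hc]
    exact hhalf x hx y hy
  have hcontr : ContractingWith (1 / 2 : NNReal) (hmaps.restrict T Kb Kb) :=
    ⟨by rw [← NNReal.coe_lt_coe]; norm_num, (hmaps.lipschitzOnWith_iff_restrict).1 hLipT⟩
  have hKc : IsComplete Kb := Metric.isClosed_closedBall.isComplete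
  obtain ⟨w, hwK, hwfix, -, -⟩ :=
    hcontr.exists_fixedPoint' hKc hmaps hxiK (edist_ne_top _ _)
  have hwfix' : T w = w := hwfix
  -- points in Kb are away from the X_j
  have hwX : ∀ z ∈ Kb, ∀ j, z - Xs j ≠ 0 := by
    intro z hz j h
    have h1 := hmin j
    have h2 := norm_sub_le_norm_sub_add_norm_sub ξ z (Xs j)
    have h3 : ‖ξ - z‖ ≤ r := by
      rw [norm_sub_rev]; exact (hmemiff z).1 hz
    rw [h, norm_zero, add_zero] at h2
    have h4 : r < 3 / (C₁ * n) := by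
      rw [hrdef, div_lt_div_iff₀ (by positivity) (by positivity)]
      nlinarith [mul_pos hC₁ hn0]
    linarith
  -- critical point equation ↔ fixed point equation
  have hiff : ∀ z ∈ Kb,
      ((Polynomial.derivative
        ((Polynomial.X - Polynomial.C ξ) *
          ∏ j, (Polynomial.X - Polynomial.C (Xs j)))).IsRoot z ↔ T z = z) := by
    intro z hz
    have hnz := hwX z hz
    have hprod : (∏ j, (z - Xs j)) ≠ 0 := Finset.prod_ne_zero_iff.2 fun j _ => hnz j
    have hσz := hσne z hz
    have ha : (n : ℂ) * σ z ≠ 0 := mul_ne_zero hnne hσz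
    have hsum : ∑ j, (z - Xs j)⁻¹ = (n : ℂ) * σ z := by
      rw [hσz' z, ← mul_assoc, mul_inv_cancel₀ hnne, one_mul]
    rw [Polynomial.IsRoot.def, deriv_eval_aux n ξ Xs z hnz, hsum, mul_eq_zero]
    simp only [hprod, false_or]
    constructor
    · intro h
      have h2 : z - ξ = -1 / ((n : ℂ) * σ z) := by
        rw [eq_div_iff ha]; linear_combination h
      rw [hTz z, inv_eq_one_div]
      linear_combination -h2
    · intro h
      rw [hTz z] at h
      have h2 : z - ξ = -((n : ℂ) * σ z)⁻¹ := by linear_combination -h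
      rw [h2, neg_mul, inv_mul_cancel₀ ha]
      ring
  refine ⟨w, (hmemiff w).1 hwK, (hiff w hwK).2 hwfix', ?_, ?_⟩
  · -- uniqueness
    intro w' hw'abs hw'root
    have hw'K : w' ∈ Kb := (hmemiff w').2 hw'abs
    have hfix' : T w' = w' := (hiff w' hw'K).1 hw'root
    have h1 := hhalf w' hw'K w hwK
    rw [hfix', hwfix'] at h1
    have h2 : ‖w' - w‖ = 0 := by
      have := norm_nonneg (w' - w)
      linarith
    exact sub_eq_zero.1 (norm_eq_zero.1 h2)
  · -- the quantitative estimate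
    have hσw := hσne w hwK
    have hσξne := hσne ξ hxiK
    have hn1ne : ((n : ℂ) + 1) ≠ 0 := by
      have h : ((n : ℂ) + 1) = ((n + 1 : ℕ) : ℂ) := by push_cast; ring
      rw [h]
      exact Nat.cast_ne_zero.2 n.succ_ne_zero
    have habs1 : ‖(n : ℂ) + 1‖ = (n : ℝ) + 1 := by
      have h : ((n : ℂ) + 1) = ((n + 1 : ℕ) : ℂ) := by push_cast; ring
      rw [h, Complex.norm_natCast]; push_cast; ring
    have hfixw : w - ξ = -((n : ℂ) * σ w)⁻¹ := by
      conv_lhs => rw [← hwfix', hTz w]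
      ring
    have hEeq : w - ξ + ((n : ℂ) + 1)⁻¹ * (σ ξ)⁻¹
        = ((n : ℂ) * (σ w - σ ξ) - σ ξ) * (((n : ℂ) * ((n : ℂ) + 1)) * (σ ξ * σ w))⁻¹ :=
      alg2_aux ξ w (n : ℂ) (σ ξ) (σ w) hnne hn1ne hσξne hσw hfixw
    have habswξ : ‖w - ξ‖ ≤ r := (hmemiff w).1 hwK
    have hnum : ‖(n : ℂ) * (σ w - σ ξ) - σ ξ‖ ≤ 3 * kLip / (2 * C₁) + C₂ := by
      have t1 : ‖(n : ℂ) * (σ w - σ ξ) - σ ξ‖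
          ≤ ‖(n : ℂ) * (σ w - σ ξ)‖ + ‖σ ξ‖ := by
        have := norm_add_le ((n : ℂ) * (σ w - σ ξ)) (-(σ ξ))
        simpa [sub_eq_add_neg, norm_neg] using this
      have t2 : ‖(n : ℂ) * (σ w - σ ξ)‖ = (n : ℝ) * ‖σ w - σ ξ‖ := by
        rw [norm_mul, Complex.norm_natCast]
      have t3 := hL w hwK ξ hxiK
      have t4 : ‖σ w - σ ξ‖ ≤ kLip * r :=
        le_trans t3 (mul_le_mul_of_nonneg_left habswξ hk.le)
      have t5 : (n : ℝ) * (kLip * r) = 3 * kLip / (2 * C₁) := by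
        rw [hrdef]; field_simp
      have t6 : (n : ℝ) * ‖σ w - σ ξ‖ ≤ 3 * kLip / (2 * C₁) := by
        rw [← t5]; exact mul_le_mul_of_nonneg_left t4 hn0.le
      rw [t2] at t1
      linarith
    have hden : (n : ℝ) ^ 2 * (3 * C₁ ^ 2 / 4)
        ≤ ‖((n : ℂ) * ((n : ℂ) + 1)) * (σ ξ * σ w)‖ := by
      rw [norm_mul, norm_mul, norm_mul, Complex.norm_natCast, habs1]
      have hB := hσlow w hwK
      have m1 : C₁ * (3 * C₁ / 4) ≤ ‖σ ξ‖ * ‖σ w‖ :=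
        mul_le_mul hlow hB (by positivity) (le_trans hC₁.le hlow)
      have m2 : (n : ℝ) * (n : ℝ) ≤ (n : ℝ) * ((n : ℝ) + 1) := by nlinarith
      calc (n : ℝ) ^ 2 * (3 * C₁ ^ 2 / 4)
          = ((n : ℝ) * (n : ℝ)) * (C₁ * (3 * C₁ / 4)) := by ring
        _ ≤ ((n : ℝ) * ((n : ℝ) + 1)) * (‖σ ξ‖ * ‖σ w‖) :=
            mul_le_mul m2 m1 (by positivity) (by positivity)
    have hdenpos : (0 : ℝ) < (n : ℝ) ^ 2 * (3 * C₁ ^ 2 / 4) := by positivity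
    have habsden : (0 : ℝ) < ‖((n : ℂ) * ((n : ℂ) + 1)) * (σ ξ * σ w)‖ :=
      lt_of_lt_of_le hdenpos hden
    have hcore : 3 * kLip / (2 * C₁) + C₂ < C * (kLip + 1) * (3 * C₁ ^ 2 / 4) := by
      rw [div_add' _ _ _ (by positivity : (2 * C₁) ≠ 0), div_lt_iff₀ (by positivity)]
      nlinarith [mul_lt_mul_of_pos_right hCC (show (0:ℝ) < kLip + 1 by linarith),
        mul_nonneg (sub_nonneg.2 hC12) hC₂.le,
        mul_nonneg (mul_nonneg hk.le hC₂.le) hC₂.le]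
    calc ‖w - ξ + ((n : ℂ) + 1)⁻¹ * (σ ξ)⁻¹‖
        = ‖(n : ℂ) * (σ w - σ ξ) - σ ξ‖
            * (‖((n : ℂ) * ((n : ℂ) + 1)) * (σ ξ * σ w)‖)⁻¹ := by
          rw [hEeq, norm_mul, norm_inv]
      _ ≤ (3 * kLip / (2 * C₁) + C₂) * ((n : ℝ) ^ 2 * (3 * C₁ ^ 2 / 4))⁻¹ := by
          apply mul_le_mul hnum (inv_anti₀ hdenpos hden)
            (inv_nonneg.2 (norm_nonneg _)) (by positivity)
      _ < (C * (kLip + 1) * (3 * C₁ ^ 2 / 4)) * ((n : ℝ) ^ 2 * (3 * C₁ ^ 2 / 4))⁻¹ :=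
          mul_lt_mul_of_pos_right hcore (by positivity)
      _ = C * (kLip + 1) / (n : ℝ) ^ 2 := by
          field_simp
end

section
/- Assume ξ ∈ ℂ, X_1,…,X_n ∈ ℂ, and positive constants C_1, C_2, k_Lip, C satisfy: C_1 ≤ |(1/n)∑_{j=1}^n 1/(ξ−X_j)| ≤ C_2 with C_1 ≤ C_2; min_{1≤j≤n} |ξ−X_j| > 3/(C_1 n); C > 8(1+2C_2²)/C_1³; and n > 4C_2·max{1/C_1, C(k_Lip+1)}. Set c_n := ξ − (1/(n+1))·1/((1/n)∑_{j=1}^n 1/(ξ−X_j)) and Y_n := ξ − 1/((1/n)∑_{j=1}^n 1/(ξ−X_j)). Then: (i) for every z with |z−c_n| ≤ C(k_Lip+1)/n² one has C(k_Lip+1)/n² < |z−ξ| < 5/(4C_1 n), also C(k_Lip+1)/n² < |z−Y_n| < 2/C_1, and C(k_Lip+1)/n² < 1/(C_1 n) < |z−X_j| for all 1 ≤ j ≤ n; (ii) for every z with |z−ξ| ≤ 3/(2nC_1) one has 3/(2C_1 n) < |z−Y_n| < 5/(2C_1), 3/(2C_1 n) < |z−X_j| for all 1 ≤ j ≤ n,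 and 1/(2C_1 n) < |z−c_n| whenever |z−ξ| = 3/(2nC_1). -/
set_option maxHeartbeats 4000000 in
/-- Lemma `detIneq`: key inequalities near the root `ξ`. -/
theorem detLoc_inequalities
    (n : ℕ) (ξ : ℂ) (Xs : Fin n → ℂ) (C₁ C₂ kLip C : ℝ)
    (hC₁ : 0 < C₁) (hC₂ : 0 < C₂) (hk : 0 < kLip) (hle : C₁ ≤ C₂)
    (hlow : C₁ ≤ ‖(n : ℂ)⁻¹ * ∑ j, (ξ - Xs j)⁻¹‖)
    (hupp : ‖(n : ℂ)⁻¹ * ∑ j, (ξ - Xs j)⁻¹‖ ≤ C₂)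
    (hmin : ∀ j, 3 / (C₁ * n) < ‖ξ - Xs j‖)
    (hC : 8 * (1 + 2 * C₂ ^ 2) / C₁ ^ 3 < C)
    (hn : 4 * C₂ * max (1 / C₁) (C * (kLip + 1)) < (n : ℝ))
    (S cn Yn : ℂ)
    (hS : S = (n : ℂ)⁻¹ * ∑ j, (ξ - Xs j)⁻¹)
    (hcn : cn = ξ - ((n : ℂ) + 1)⁻¹ * S⁻¹)
    (hYn : Yn = ξ - S⁻¹) :
    (∀ z : ℂ, ‖z - cn‖ ≤ C * (kLip + 1) / (n : ℝ) ^ 2 →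
      (C * (kLip + 1) / (n : ℝ) ^ 2 < ‖z - ξ‖ ∧
        ‖z - ξ‖ < 5 / (4 * C₁ * n)) ∧
      (C * (kLip + 1) / (n : ℝ) ^ 2 < ‖z - Yn‖ ∧
        ‖z - Yn‖ < 2 / C₁) ∧
      (C * (kLip + 1) / (n : ℝ) ^ 2 < 1 / (C₁ * n) ∧
        ∀ j, 1 / (C₁ * n) < ‖z - Xs j‖)) ∧
    (∀ z : ℂ, ‖z - ξ‖ ≤ 3 / (2 * n * C₁) →
      (3 / (2 * C₁ * n) < ‖z - Yn‖ ∧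
        ‖z - Yn‖ < 5 / (2 * C₁)) ∧
      (∀ j, 3 / (2 * C₁ * n) < ‖z - Xs j‖) ∧
      (‖z - ξ‖ = 3 / (2 * n * C₁) →
        1 / (2 * C₁ * n) < ‖z - cn‖)) := by
  set N : ℝ := (n : ℝ) with hN
  set a : ℝ := ‖S‖ with ha
  have haC₁ : C₁ ≤ a := by rw [ha, hS]; exact hlow
  have haC₂ : a ≤ C₂ := by rw [ha, hS]; exact hupp
  have ha0 : 0 < a := lt_of_lt_of_le hC₁ haC₁
  have hSne : S ≠ 0 := by
    intro h; rw [ha, h] at ha0; simp at ha0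
  have hC0 : 0 < C := lt_trans (by positivity) hC
  set K : ℝ := C * (kLip + 1) with hKdef
  have hK0 : 0 < K := by positivity
  have hmax1 : 4 * C₂ * (1 / C₁) < N :=
    lt_of_le_of_lt (mul_le_mul_of_nonneg_left (le_max_left _ _) (by positivity)) hn
  have hmax2 : 4 * C₂ * K < N :=
    lt_of_le_of_lt (mul_le_mul_of_nonneg_left (le_max_right _ _) (by positivity)) hn
  have hN4 : (4 : ℝ) < N := by
    have h1 : (1 : ℝ) ≤ C₂ / C₁ := (one_le_div hC₁).mpr hle
    have : (4 : ℝ) ≤ 4 * C₂ * (1 / C₁) := by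
      rw [mul_one_div, le_div_iff₀ hC₁]
      nlinarith
    linarith
  have hN0 : (0 : ℝ) < N := by linarith
  have hN1 : (1 : ℝ) ≤ N := by linarith
  have hr1 : a⁻¹ ≤ C₁⁻¹ := inv_anti₀ hC₁ haC₁
  have hr2 : C₂⁻¹ ≤ a⁻¹ := inv_anti₀ ha0 haC₂
  have ha0' : (0:ℝ) < a⁻¹ := by positivity
  -- the natural cast of n in ℂ
  have hnc : ((n : ℂ) + 1) = ((N + 1 : ℝ) : ℂ) := by rw [hN]; push_cast; ring
  have hncne : ((n : ℂ) + 1) ≠ 0 := by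
    rw [hnc]
    simp only [ne_eq, Complex.ofReal_eq_zero]
    positivity
  -- key abs computations
  have habs_cnξ : ‖cn - ξ‖ = (N + 1)⁻¹ * a⁻¹ := by
    have : cn - ξ = -(((n : ℂ) + 1)⁻¹ * S⁻¹) := by rw [hcn]; ring
    rw [this, norm_neg, norm_mul, norm_inv, norm_inv, hnc, Complex.norm_real, Real.norm_eq_abs,
      abs_of_pos (by positivity : (0:ℝ) < N + 1)]
  have habs_Ynξ : ‖Yn - ξ‖ = a⁻¹ := by
    have : Yn - ξ = -(S⁻¹) := by rw [hYn]; ring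
    rw [this, norm_neg, norm_inv]
  have habs_cnYn : ‖cn - Yn‖ = N * (N + 1)⁻¹ * a⁻¹ := by
    have h1 : cn - Yn = (n : ℂ) * ((n : ℂ) + 1)⁻¹ * S⁻¹ := by
      rw [hcn, hYn]
      field_simp
      ring
    rw [h1, norm_mul, norm_mul, norm_inv, norm_inv, hnc, Complex.norm_real, Real.norm_eq_abs,
      abs_of_pos (by positivity : (0:ℝ) < N + 1), Complex.norm_natCast]
  -- triangle inequality helpers
  have tri : ∀ u v w : ℂ, ‖u - w‖ ≤ ‖u - v‖ + ‖v - w‖ :=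
    fun u v w => norm_sub_le_norm_sub_add_norm_sub u v w
  have symm : ∀ u v : ℂ, ‖u - v‖ = ‖v - u‖ :=
    fun u v => norm_sub_rev u v
  -- real estimates
  set ε : ℝ := K / N ^ 2 with hε
  have hεsmall : ε < 1 / (4 * C₂ * N) := by
    rw [hε, div_lt_div_iff₀ (by positivity) (by positivity)]
    nlinarith
  have hC₁C₂ : 1 / (4 * C₂ * N) ≤ 1 / (4 * C₁ * N) := by
    gcongr
  -- bounds for |cn - ξ|
  have hcn_low : 1 / (2 * N * C₂) ≤ (N + 1)⁻¹ * a⁻¹ := by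
    rw [← mul_inv, one_div]
    apply inv_anti₀ (by positivity)
    nlinarith
  have hcn_high : (N + 1)⁻¹ * a⁻¹ < 1 / (N * C₁) := by
    rw [← mul_inv, one_div]
    apply inv_strictAnti₀ (by positivity)
    nlinarith
  -- bounds for |cn - Yn|
  have hhalf : (1 / 2 : ℝ) ≤ N * (N + 1)⁻¹ := by
    rw [← div_eq_mul_inv, le_div_iff₀ (by positivity)]
    linarith
  have hone : N * (N + 1)⁻¹ ≤ 1 := by
    rw [← div_eq_mul_inv, div_le_one (by positivity)]
    linarith
  have hcY_low : 1 / (2 * C₂) ≤ N * (N + 1)⁻¹ * a⁻¹ := by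
    have h1 : 1 / (2 * C₂) = (1 / 2) * C₂⁻¹ := by rw [one_div, mul_inv, one_div]
    rw [h1]
    exact mul_le_mul hhalf hr2 (by positivity) (by positivity)
  have hcY_high : N * (N + 1)⁻¹ * a⁻¹ ≤ C₁⁻¹ := by
    calc N * (N + 1)⁻¹ * a⁻¹ ≤ 1 * a⁻¹ := by
          exact mul_le_mul_of_nonneg_right hone (by positivity)
      _ = a⁻¹ := one_mul _
      _ ≤ C₁⁻¹ := hr1
  -- more small quantities
  have hε2 : ε < 1 / (4 * C₁ * N) := lt_of_lt_of_le hεsmall hC₁C₂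
  have hεC₂ : 1 / (4 * C₂ * N) ≤ 1 / (2 * C₂) := by
    apply one_div_le_one_div_of_le (by positivity)
    nlinarith
  have heq54 : (5:ℝ) / (4 * C₁ * N) = 1 / (N * C₁) + 1 / (4 * C₁ * N) := by
    field_simp
    ring
  constructor
  · -- part (i)
    intro z hz
    have htri1 := tri cn z ξ
    rw [symm cn z] at htri1
    have hlowξ : 1 / (2 * N * C₂) - ε ≤ ‖z - ξ‖ := by
      have := tri cn z ξ
      rw [symm cn z] at this
      rw [habs_cnξ] at this
      linarith [hcn_low]
    have hεhalf : 2 * ε < 1 / (2 * N * C₂) := by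
      have h1 : 1 / (4 * C₂ * N) * 2 = 1 / (2 * N * C₂) := by
        field_simp; ring
      nlinarith
    have huppξ : ‖z - ξ‖ < 5 / (4 * C₁ * N) := by
      have h2 := tri z cn ξ
      rw [habs_cnξ] at h2
      rw [heq54]
      linarith [hcn_high, hε2]
    refine ⟨⟨by linarith, ?_⟩, ⟨?_, ?_⟩, ?_, ?_⟩
    · -- upper bound on |z - ξ|, adjusting 4*C₁*n vs 4*C₁*N
      exact huppξ
    · -- lower bound on |z - Yn|
      have h3 := tri cn z Yn
      rw [symm cn z, habs_cnYn] at h3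
      have : 1 / (2 * C₂) - ε ≤ ‖z - Yn‖ := by linarith [hcY_low]
      nlinarith [hεsmall, hεC₂]
    · -- upper bound on |z - Yn|
      have h3 := tri z cn Yn
      rw [habs_cnYn] at h3
      have hεsmall2 : ε < 1 / C₁ := by
        have : 1 / (4 * C₁ * N) ≤ 1 / C₁ := by
          rw [div_le_div_iff₀ (by positivity) hC₁]
          nlinarith
        linarith [hε2]
      have h2C : (2:ℝ) / C₁ = 1 / C₁ + 1 / C₁ := by ring
      rw [h2C]
      have hcY' : N * (N + 1)⁻¹ * a⁻¹ ≤ 1 / C₁ := by rw [one_div]; exact hcY_high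
      linarith [hcY']
    · -- ε < 1/(C₁ n)
      have : 1 / (4 * C₁ * N) ≤ 1 / (C₁ * N) := by
        apply one_div_le_one_div_of_le (by positivity)
        nlinarith
      linarith [hε2]
    · -- lower bound on |z - Xs j|
      intro j
      have h4 := tri ξ z (Xs j)
      have hXj := hmin j
      have h5 : ‖ξ - z‖ = ‖z - ξ‖ := symm ξ z
      rw [h5] at h4
      have h6 : 3 / (C₁ * N) - 5 / (4 * C₁ * N) ≤ ‖z - Xs j‖ := by
        linarith [huppξ]
      have h7 : 1 / (C₁ * N) < 3 / (C₁ * N) - 5 / (4 * C₁ * N) := by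
        have e : 3 / (C₁ * N) - 5 / (4 * C₁ * N) = 7 / (4 * C₁ * N) := by field_simp; ring
        rw [e, div_lt_div_iff₀ (by positivity) (by positivity)]
        nlinarith [mul_pos hC₁ hN0]
      linarith
  · -- part (ii)
    intro z hz
    have hzξ : ‖z - ξ‖ ≤ 3 / (2 * N * C₁) := hz
    have hYnlow : 3 / (2 * C₁ * N) < ‖z - Yn‖ := by
      have h1 := tri Yn z ξ
      rw [symm Yn z, habs_Ynξ] at h1
      have h2 : C₂⁻¹ - 3 / (2 * N * C₁) ≤ ‖z - Yn‖ := by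
        linarith [hr2]
      have h3 : 3 / (2 * C₁ * N) < C₂⁻¹ - 3 / (2 * N * C₁) := by
        have hNC₁ : 4 * C₂ < N * C₁ := by
          have h := hmax1
          rw [mul_one_div, div_lt_iff₀ hC₁] at h
          linarith
        have hkey : 3 / (N * C₁) < C₂⁻¹ := by
          rw [div_lt_iff₀ (by positivity), inv_mul_eq_div, lt_div_iff₀ hC₂]
          linarith
        have heq : 3 / (2 * C₁ * N) + 3 / (2 * N * C₁) = 3 / (N * C₁) := by
          field_simp; ring
        linarith
      linarith
    refine ⟨⟨hYnlow, ?_⟩, ?_, ?_⟩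
    · -- upper bound
      have h1 := tri z ξ Yn
      rw [symm ξ Yn, habs_Ynξ] at h1
      have h3 : 3 / (2 * N * C₁) < 3 / (2 * C₁) := by
        rw [div_lt_div_iff₀ (by positivity) (by positivity)]
        nlinarith
      have h4 : a⁻¹ ≤ 1 / C₁ := by rw [one_div]; exact hr1
      have h5 : (5:ℝ) / (2 * C₁) = 1 / C₁ + 3 / (2 * C₁) := by
        field_simp; ring
      rw [h5]
      linarith [h4]
    · intro j
      have h1 := tri ξ z (Xs j)
      rw [symm ξ z] at h1
      have hXj := hmin j
      have heq : 3 / (C₁ * N) - 3 / (2 * N * C₁) = 3 / (2 * C₁ * N) := by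
        field_simp; ring
      linarith
    · intro hzeq
      have h1 := tri z cn ξ
      rw [habs_cnξ] at h1
      have h2 : (N + 1)⁻¹ * a⁻¹ < 1 / (N * C₁) := hcn_high
      have heq : 3 / (2 * N * C₁) - 1 / (N * C₁) = 1 / (2 * C₁ * N) := by
        field_simp; ring
      rw [hzeq] at h1
      linarith
end

section
/- Fix C, c, ε > 0. Let μ be a probability measure on ℂ supported on B(0, C) with |m_μ(z)| ≥ c for all z on Γ, the boundary circle of B(0, C+ε). Let X_1,…,X_n be i.i.d. random variables with distribution μ. Then for any function φ (possibly depending on n) that is analytic in a neighborhood of the closure of B(0, C+ε), one has ∑_{j=1}^{n−1} φ(w_j^{(n)}) = ∑_{i=1}^n φ(X_i) + O(∮_Γ |φ(z)| |dz|), where w_1^{(n)},…,w_{n−1}^{(n)} are the critical points of p_n(z) := ∏_{i=1}^n (z−X_i) and the implicit constant depends only on C, c, and ε. -/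
open MeasureTheory ProbabilityTheory Filter
open scoped ENNReal

/-- The Cauchy–Stieltjes transform of a measure on `ℂ`. -/
noncomputable def cauchyStieltjes (μ : Measure ℂ) (z : ℂ) : ℂ := ∫ x, (z - x)⁻¹ ∂μ

/-- The monic polynomial with roots `x 0, …, x (n-1)`. -/
noncomputable def rootPoly (n : ℕ) (x : ℕ → ℂ) : Polynomial ℂ :=
  ∏ j ∈ Finset.range n, (Polynomial.X - Polynomial.C (x j))

/-- The arclength integral `∮_Γ |φ(z)| |dz|` over the circle of radius `r` about `0`. -/
noncomputable def circleAbsIntegral (φ : ℂ → ℂ) (r : ℝ) : ℝ :=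
  r * ∫ θ in (0:ℝ)..(2 * Real.pi),
    ‖φ ((r : ℂ) * Complex.exp ((θ : ℂ) * Complex.I))‖

section Helpers

open Metric Polynomial

lemma my_integral_add {f g : ℂ → ℂ} {c : ℂ} {R : ℝ} (hf : CircleIntegrable f c R)
    (hg : CircleIntegrable g c R) :
    (∮ z in C(c, R), (f z + g z)) = (∮ z in C(c, R), f z) + ∮ z in C(c, R), g z := by
  simp only [circleIntegral, smul_add, intervalIntegral.integral_add hf.out hg.out]

lemma hasDerivAt_msetprod (T : Multiset ℂ) (z : ℂ) (hz : ∀ w ∈ T, z ≠ w) :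
    HasDerivAt (fun y => (T.map fun w => y - w).prod)
      ((T.map fun w => z - w).prod * (T.map fun w => (z - w)⁻¹).sum) z := by
  induction T using Multiset.induction_on with
  | empty => simpa using hasDerivAt_const z (1:ℂ)
  | cons a T ih =>
    have ha : z - a ≠ 0 := sub_ne_zero.2 (hz a (Multiset.mem_cons_self a T))
    have key := ((hasDerivAt_id z).sub_const a).fun_mul (ih fun w hw => hz w (Multiset.mem_cons_of_mem hw))
    simp only [Multiset.map_cons, Multiset.prod_cons, Multiset.sum_cons]
    refine key.congr_deriv ?_
    simp only [id]
    linear_combination -((T.map fun w => z - w).prod * mul_inv_cancel₀ ha)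

lemma continuousOn_msum (T : Multiset ℂ) (s : Set ℂ) (h : ∀ w ∈ T, ∀ z ∈ s, z ≠ w) :
    ContinuousOn (fun z => (T.map fun w => (z - w)⁻¹).sum) s := by
  induction T using Multiset.induction_on with
  | empty => simpa using continuousOn_const
  | cons a T ih =>
    simp only [Multiset.map_cons, Multiset.sum_cons]
    exact ((continuousOn_id.sub continuousOn_const).inv₀
      (fun z hzs => sub_ne_zero.2 (h a (Multiset.mem_cons_self a T) z hzs))).add
      (ih fun w hw => h w (Multiset.mem_cons_of_mem hw))

lemma multiset_cauchy {R : ℝ} (hR : 0 < R) {φ : ℂ → ℂ} (hφ : DiffContOnCl ℂ φ (ball 0 R))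
    (T : Multiset ℂ) (hT : ∀ w ∈ T, w ∈ ball (0:ℂ) R) :
    (∮ z in C(0, R), (T.map fun w => (z - w)⁻¹).sum * φ z)
      = (2 * Real.pi * Complex.I) * (T.map φ).sum := by
  have hφc : ContinuousOn φ (sphere (0:ℂ) R) := by
    refine hφ.continuousOn.mono ?_
    rw [closure_ball _ hR.ne']
    exact sphere_subset_closedBall
  have hne : ∀ w ∈ T, ∀ z ∈ sphere (0:ℂ) R, z ≠ w := by
    intro w hw z hzs hzw
    subst hzw
    rw [mem_sphere_zero_iff_norm] at hzs
    have h2 := hT _ hw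
    rw [mem_ball_zero_iff, hzs] at h2
    exact lt_irrefl _ h2
  induction T using Multiset.induction_on with
  | empty => simp [circleIntegral]
  | cons a T ih =>
    have ha : a ∈ ball (0:ℂ) R := hT a (Multiset.mem_cons_self a T)
    have hT' : ∀ w ∈ T, w ∈ ball (0:ℂ) R := fun w hw => hT w (Multiset.mem_cons_of_mem hw)
    have hne' : ∀ w ∈ T, ∀ z ∈ sphere (0:ℂ) R, z ≠ w :=
      fun w hw => hne w (Multiset.mem_cons_of_mem hw)
    have hint1 : CircleIntegrable (fun z => (z - a)⁻¹ * φ z) 0 R := by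
      refine ContinuousOn.circleIntegrable hR.le ?_
      exact ((continuousOn_id.sub continuousOn_const).inv₀
        (fun z hzs => sub_ne_zero.2 (hne a (Multiset.mem_cons_self a T) z hzs))).mul hφc
    have hint2 : CircleIntegrable (fun z => (T.map fun w => (z - w)⁻¹).sum * φ z) 0 R :=
      ContinuousOn.circleIntegrable hR.le ((continuousOn_msum T _ hne').mul hφc)
    have hC : (∮ z in C(0, R), (z - a)⁻¹ * φ z) = (2 * Real.pi * Complex.I) * φ a := by
      have := hφ.circleIntegral_sub_inv_smul ha
      simpa [smul_eq_mul] using this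
    simp only [Multiset.map_cons, Multiset.sum_cons, add_mul]
    rw [my_integral_add hint1 hint2, hC, ih hT' hne']
    ring

lemma re_term (Cb : ℝ) (z x : ℂ) (hCb : 0 < Cb) (hx : ‖x‖ < Cb) (hz : Cb ≤ ‖z‖) :
    ‖z‖ * (‖z‖ - Cb) / (‖z‖ + Cb)^2 ≤ (z * (z - x)⁻¹).re := by
  have hw : z - x ≠ 0 := by
    intro h
    rw [sub_eq_zero] at h
    subst h
    exact absurd hz (not_le.2 hx)
  have hnum : ‖z‖ * (‖z‖ - Cb) ≤ (z * (starRingEnd ℂ) (z - x)).re := by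
    have h1 : z * (starRingEnd ℂ) (z - x) = (Complex.normSq z : ℂ) - z * (starRingEnd ℂ) x := by
      rw [map_sub, mul_sub, Complex.mul_conj]
    rw [h1, Complex.sub_re, Complex.ofReal_re]
    have h2 : (z * (starRingEnd ℂ) x).re ≤ ‖z‖ * ‖x‖ := by
      calc (z * (starRingEnd ℂ) x).re ≤ ‖z * (starRingEnd ℂ) x‖ := Complex.re_le_norm _
        _ = ‖z‖ * ‖x‖ := by
          rw [norm_mul]
          simp
    have h3 : Complex.normSq z = ‖z‖^2 := by
      rw [Complex.normSq_eq_norm_sq]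
    nlinarith [norm_nonneg z, norm_nonneg x]
  have hden : Complex.normSq (z - x) ≤ (‖z‖ + Cb)^2 := by
    have h3 : Complex.normSq (z - x) = ‖z - x‖^2 := by
      rw [Complex.normSq_eq_norm_sq]
    have h4 : ‖z - x‖ ≤ ‖z‖ + Cb := le_trans (norm_sub_le _ _) (by linarith)
    nlinarith [norm_nonneg (z - x)]
  have hden0 : 0 < Complex.normSq (z - x) := Complex.normSq_pos.2 hw
  have hre : (z * (z - x)⁻¹).re = (z * (starRingEnd ℂ) (z - x)).re / Complex.normSq (z - x) := by
    rw [Complex.inv_def, ← mul_assoc, Complex.re_mul_ofReal, div_eq_mul_inv]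
  rw [hre]
  exact div_le_div₀ (le_trans (by nlinarith [norm_nonneg z]) hnum) hnum hden0 hden

lemma det_bound (C ε : ℝ) (hC : 0 < C) (hε : 0 < ε) (n : ℕ) (hn : 0 < n)
    (x : ℕ → ℂ) (hx : ∀ j ∈ Finset.range n, x j ∈ Metric.ball (0:ℂ) C)
    (φ : ℂ → ℂ)
    (hφ : ∃ U : Set ℂ, IsOpen U ∧ Metric.closedBall (0 : ℂ) (C + ε) ⊆ U ∧
        DifferentiableOn ℂ φ U) :
    ‖(Multiset.map φ (Polynomial.roots
          (Polynomial.derivative (rootPoly n x)))).sum -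
        ∑ i ∈ Finset.range n, φ (x i)‖ ≤
      ((2*C+ε)^2/ε^3) * circleAbsIntegral φ (C+ε) := by
  set R : ℝ := C + ε with hRdef
  have hR : 0 < R := by positivity
  have hCR : C < R := by simp [hRdef]; linarith
  have hxn : ∀ j ∈ Finset.range n, ‖x j‖ < C := by
    intro j hj; simpa [mem_ball_zero_iff] using hx j hj
  set p : Polynomial ℂ := rootPoly n x with hpdef
  set q : Polynomial ℂ := p.derivative with hqdef
  -- multiset of the roots x
  set T₀ : Multiset ℂ := (Finset.range n).val.map x with hT0def
  have hT0mem : ∀ w ∈ T₀, ‖w‖ < C := by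
    intro w hw
    rw [hT0def, Multiset.mem_map] at hw
    obtain ⟨j, hj, rfl⟩ := hw
    exact hxn j hj
  -- evaluation of p
  have evalp : ∀ y : ℂ, p.eval y = (T₀.map fun w => y - w).prod := by
    intro y
    rw [hpdef, rootPoly, Polynomial.eval_prod]
    rw [Finset.prod_eq_multiset_prod, hT0def, Multiset.map_map]
    simp
  -- the functions s and σ, as Finset sums
  set s : ℂ → ℂ := fun y => ∑ j ∈ Finset.range n, (y - x j)⁻¹ with hsdef
  set σ : ℂ → ℂ := fun y => ∑ j ∈ Finset.range n, -1 / (y - x j) ^ 2 with hσdef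
  have hsT0 : ∀ y : ℂ, s y = (T₀.map fun w => (y - w)⁻¹).sum := by
    intro y
    show (∑ j ∈ Finset.range n, (y - x j)⁻¹) = _
    rw [Finset.sum_eq_multiset_sum, hT0def, Multiset.map_map]
    rfl
  -- p does not vanish for ‖z‖ ≥ C
  have hpne : ∀ z : ℂ, C ≤ ‖z‖ → p.eval z ≠ 0 := by
    intro z hz
    rw [evalp]
    apply Multiset.prod_ne_zero
    intro h0
    rw [Multiset.mem_map] at h0
    obtain ⟨w, hw, hw0⟩ := h0
    rw [sub_eq_zero] at hw0
    subst hw0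
    exact absurd hz (not_le.2 (hT0mem _ hw))
  -- lower bound on s
  have hslow : ∀ z : ℂ, C ≤ ‖z‖ → (n : ℝ) * (‖z‖ * (‖z‖ - C) / (‖z‖ + C)^2) ≤ (z * s z).re := by
    intro z hz
    rw [hsdef]
    simp only [Finset.mul_sum, Complex.re_sum]
    calc (n : ℝ) * (‖z‖ * (‖z‖ - C) / (‖z‖ + C)^2)
        = ∑ _j ∈ Finset.range n, (‖z‖ * (‖z‖ - C) / (‖z‖ + C)^2) := by
          rw [Finset.sum_const, Finset.card_range, nsmul_eq_mul]
      _ ≤ ∑ j ∈ Finset.range n, (z * (z - x j)⁻¹).re := by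
          apply Finset.sum_le_sum
          intro j hj
          exact re_term C z (x j) hC (hxn j hj) hz
  have hsne : ∀ z : ℂ, C < ‖z‖ → s z ≠ 0 := by
    intro z hz h0
    have h1 := hslow z hz.le
    rw [h0, mul_zero] at h1
    simp only [Complex.zero_re] at h1
    have h2 : (0:ℝ) < (n : ℝ) * (‖z‖ * (‖z‖ - C) / (‖z‖ + C)^2) := by
      have hn' : (0:ℝ) < (n:ℝ) := Nat.cast_pos.2 hn
      have hz0 : (0:ℝ) < ‖z‖ := lt_of_le_of_lt hC.le hz
      have hzC : (0:ℝ) < ‖z‖ - C := by linarith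
      have hd : (0:ℝ) < (‖z‖ + C)^2 := by positivity
      exact mul_pos hn' (div_pos (mul_pos hz0 hzC) hd)
    linarith
  -- q evaluated via s, off the roots
  have hqeval : ∀ z : ℂ, (∀ j ∈ Finset.range n, z ≠ x j) → q.eval z = p.eval z * s z := by
    intro z hz
    have hz' : ∀ w ∈ T₀, z ≠ w := by
      intro w hw
      rw [hT0def, Multiset.mem_map] at hw
      obtain ⟨j, hj, rfl⟩ := hw
      exact hz j hj
    have h1 : HasDerivAt (fun y => p.eval y) (q.eval z) z := Polynomial.hasDerivAt p z
    have h2 : HasDerivAt (fun y => p.eval y) (p.eval z * s z) z := by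
      have h3 := hasDerivAt_msetprod T₀ z hz'
      have h4 : (fun y => p.eval y) = fun y => (T₀.map fun w => y - w).prod := funext evalp
      rw [h4, evalp, hsT0]
      exact h3
    exact h1.unique h2
  -- all roots of q are in the ball of radius R
  have hqne0 : q ≠ 0 := by
    have hmon : p.Monic := by
      rw [hpdef, rootPoly]
      exact monic_prod_of_monic _ _ fun j _ => monic_X_sub_C (x j)
    have hdeg : p.natDegree = n := by
      rw [hpdef, rootPoly, natDegree_prod _ _ fun j _ => X_sub_C_ne_zero (x j)]
      simp [natDegree_X_sub_C]
    have hco : q.coeff (n - 1) = n := by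
      rw [hqdef, Polynomial.coeff_derivative]
      have : n - 1 + 1 = n := Nat.succ_pred_eq_of_pos hn
      rw [this]
      have : p.coeff n = 1 := by
        have := hmon.coeff_natDegree
        rwa [hdeg] at this
      rw [this, one_mul]
      have h1n : (1:ℕ) ≤ n := hn
      push_cast [h1n]
      ring
    intro h0
    rw [h0, Polynomial.coeff_zero] at hco
    have hco' : (n:ℂ) = 0 := hco.symm
    rw [Nat.cast_eq_zero] at hco'
    omega
  have hroots : ∀ w ∈ q.roots, w ∈ ball (0:ℂ) R := by
    intro w hw
    rw [Polynomial.mem_roots hqne0] at hw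
    rw [mem_ball_zero_iff]
    by_contra hcon
    push_neg at hcon
    have hwC : C < ‖w‖ := lt_of_lt_of_le hCR hcon
    have hwx : ∀ j ∈ Finset.range n, w ≠ x j := by
      intro j hj h0
      subst h0
      exact absurd (hxn j hj) (not_lt.2 hwC.le)
    have heq := hqeval w hwx
    rw [Polynomial.IsRoot.def] at hw
    rw [hw] at heq
    exact absurd heq.symm (mul_ne_zero (hpne w hwC.le) (hsne w hwC))
    -- representation of q via its roots
  have hcard : Multiset.card q.roots = q.natDegree :=
    Polynomial.splits_iff_card_roots.mp (IsAlgClosed.splits q)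
  have hq_eq : Polynomial.C q.leadingCoeff * (q.roots.map fun a => X - Polynomial.C a).prod = q :=
    Polynomial.C_leadingCoeff_mul_prod_multiset_X_sub_C hcard
  have evalq : ∀ y : ℂ, q.eval y = q.leadingCoeff * ((q.roots).map fun w => y - w).prod := by
    intro y
    conv_lhs => rw [← hq_eq]
    rw [Polynomial.eval_mul, Polynomial.eval_C, Polynomial.eval_multiset_prod, Multiset.map_map]
    congr 1
    exact congrArg Multiset.prod (Multiset.map_congr rfl (fun a _ => by simp))
  set M : ℝ := (2*C+ε)^2/ε^3 with hMdef
  set Tf : ℂ → ℂ := fun y => ((q.roots).map fun w => (y - w)⁻¹).sum with hTfdef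
  -- pointwise bound on the sphere
  have hsphere : ∀ z ∈ sphere (0:ℂ) R, ‖z‖ = R := fun z hz => mem_sphere_zero_iff_norm.mp hz
  have hzx : ∀ z ∈ sphere (0:ℂ) R, ∀ j ∈ Finset.range n, z ≠ x j := by
    intro z hz j hj h0
    rw [h0] at hz
    have h1 := hsphere _ hz
    have h2 := hxn j hj
    rw [h1] at h2
    linarith
  have hkey : ∀ z ∈ sphere (0:ℂ) R, ‖Tf z - s z‖ ≤ M := by
    intro z hz
    have hzR : ‖z‖ = R := hsphere z hz
    have hzC : C < ‖z‖ := by rw [hzR]; exact hCR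
    have hzxj : ∀ j ∈ Finset.range n, z ≠ x j := hzx z hz
    have hzw : ∀ w ∈ q.roots, z ≠ w := by
      intro w hw h0
      have := hroots w hw
      rw [← h0, mem_ball_zero_iff, hzR] at this
      exact lt_irrefl _ this
    have hp0 : p.eval z ≠ 0 := hpne z hzC.le
    have hs0 : s z ≠ 0 := hsne z hzC
    -- derivative of s
    have hds : HasDerivAt s (σ z) z := by
      rw [hsdef, hσdef]
      apply HasDerivAt.fun_sum
      intro j hj
      exact ((hasDerivAt_id z).sub_const (x j)).inv (sub_ne_zero.2 (hzxj j hj))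
    -- two formulas for derivative of q.eval
    have H1 : HasDerivAt (fun y => q.eval y) (q.eval z * s z + p.eval z * σ z) z := by
      have Hps : HasDerivAt (fun y => p.eval y * s y) (q.eval z * s z + p.eval z * σ z) z :=
        (Polynomial.hasDerivAt p z).mul hds
      apply Hps.congr_of_eventuallyEq
      have hV : IsOpen {y : ℂ | ∀ j ∈ Finset.range n, y ≠ x j} := by
        have : {y : ℂ | ∀ j ∈ Finset.range n, y ≠ x j}
            = ⋂ j ∈ Finset.range n, ({x j}ᶜ : Set ℂ) := by
          ext y
          simp [Set.mem_iInter]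
        rw [this]
        exact Set.Finite.isOpen_biInter (Finset.finite_toSet _)
          fun j _ => isOpen_compl_singleton
      filter_upwards [hV.mem_nhds (by exact hzxj : z ∈ {y : ℂ | ∀ j ∈ Finset.range n, y ≠ x j})]
        with y hy
      exact hqeval y hy
    have H2 : HasDerivAt (fun y => q.eval y) (q.eval z * Tf z) z := by
      have h3 := (hasDerivAt_msetprod q.roots z hzw).const_mul q.leadingCoeff
      have h4 : (fun y => q.eval y) = fun y => q.leadingCoeff * ((q.roots).map fun w => y - w).prod :=
        funext evalq
      rw [h4, evalq, hTfdef, mul_assoc] at *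
      exact h3
    have key : q.eval z * Tf z = q.eval z * s z + p.eval z * σ z := H2.unique H1
    have hqz : q.eval z = p.eval z * s z := hqeval z hzxj
    rw [hqz] at key
    have h5 : p.eval z * (s z * (Tf z - s z)) = p.eval z * σ z := by linear_combination key
    have h6 : s z * (Tf z - s z) = σ z := mul_left_cancel₀ hp0 h5
    -- bound on σ
    have hσb : ‖σ z‖ ≤ (n:ℝ) * (1/ε^2) := by
      rw [hσdef]
      calc ‖∑ j ∈ Finset.range n, -1 / (z - x j) ^ 2‖
          ≤ ∑ j ∈ Finset.range n, ‖-1 / (z - x j) ^ 2‖ := norm_sum_le _ _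
        _ ≤ ∑ _j ∈ Finset.range n, (1/ε^2) := by
            apply Finset.sum_le_sum
            intro j hj
            have hd : ε ≤ ‖z - x j‖ := by
              have h20 := norm_sub_norm_le z (x j)
              have h21 := hxn j hj
              rw [hzR] at h20
              have h22 : R = C + ε := hRdef
              linarith
            rw [norm_div, norm_neg, norm_one, norm_pow]
            rw [one_div, one_div]
            apply inv_anti₀ (by positivity)
            exact pow_le_pow_left₀ hε.le hd 2
        _ = (n:ℝ) * (1/ε^2) := by
            rw [Finset.sum_const, Finset.card_range, nsmul_eq_mul]
    -- lower bound on s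
    have hsb : (n:ℝ) * (ε/(2*C+ε)^2) ≤ ‖s z‖ := by
      have h7 := hslow z hzC.le
      have h8 : (z * s z).re ≤ ‖z * s z‖ := by
        exact Complex.re_le_norm _
      have h9 : ‖z * s z‖ = R * ‖s z‖ := by rw [norm_mul, hzR]
      have h10 : ‖z‖ - C = ε := by rw [hzR, hRdef]; ring
      have h11 : ‖z‖ + C = 2*C+ε := by rw [hzR, hRdef]; ring
      rw [h10, h11, hzR] at h7
      have h12 : (n:ℝ) * (R * (ε / (2*C+ε)^2)) ≤ R * ‖s z‖ := by
        calc (n:ℝ) * (R * (ε / (2*C+ε)^2)) = (n:ℝ) * (R * ε / (2*C+ε)^2) := by ring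
          _ ≤ (z * s z).re := h7
          _ ≤ R * ‖s z‖ := by rw [← h9]; exact h8
      have h13 : R * ((n:ℝ) * (ε / (2*C+ε)^2)) ≤ R * ‖s z‖ := by linarith [h12]
      exact le_of_mul_le_mul_left h13 hR
    have hsb0 : (0:ℝ) < (n:ℝ) * (ε/(2*C+ε)^2) := by
      have hn' : (0:ℝ) < (n:ℝ) := Nat.cast_pos.2 hn
      positivity
    have h14 : Tf z - s z = σ z / s z := by
      rw [eq_div_iff hs0]
      linear_combination h6
    rw [h14, norm_div]
    calc ‖σ z‖ / ‖s z‖ ≤ ((n:ℝ) * (1/ε^2)) / ((n:ℝ) * (ε/(2*C+ε)^2)) :=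
          div_le_div₀ (by positivity) hσb hsb0 hsb
      _ = M := by
          rw [hMdef]
          have hn' : (n:ℝ) ≠ 0 := Nat.cast_ne_zero.2 hn.ne'
          have h2C : (2*C+ε) ≠ 0 := by positivity
          field_simp
-- now the integral part
  obtain ⟨U, hUo, hUs, hUd⟩ := hφ
  have hφdc : DiffContOnCl ℂ φ (ball 0 R) := by
    apply DifferentiableOn.diffContOnCl
    rw [closure_ball _ hR.ne']
    exact hUd.mono hUs
  have hφc : ContinuousOn φ (sphere (0:ℂ) R) := by
    refine hφdc.continuousOn.mono ?_
    rw [closure_ball _ hR.ne']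
    exact sphere_subset_closedBall
  have hT0ball : ∀ w ∈ T₀, w ∈ ball (0:ℂ) R := by
    intro w hw
    rw [mem_ball_zero_iff]
    exact lt_trans (hT0mem w hw) hCR
  have hI1 : (∮ z in C(0, R), Tf z * φ z) = (2 * Real.pi * Complex.I) * (q.roots.map φ).sum :=
    multiset_cauchy hR hφdc q.roots hroots
  have hI2 : (∮ z in C(0, R), s z * φ z) = (2 * Real.pi * Complex.I) * (T₀.map φ).sum := by
    have : (fun z => s z * φ z) = fun z => (T₀.map fun w => (z - w)⁻¹).sum * φ z := by
      funext y
      rw [hsT0]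
    rw [this]
    exact multiset_cauchy hR hφdc T₀ hT0ball
  have hT0φ : (T₀.map φ).sum = ∑ i ∈ Finset.range n, φ (x i) := by
    rw [hT0def, Multiset.map_map, Finset.sum_eq_multiset_sum]
    rfl
  -- continuity of the integrand pieces on the sphere
  have hTfc : ContinuousOn Tf (sphere (0:ℂ) R) := by
    apply continuousOn_msum
    intro w hw z hzs h0
    have := hroots w hw
    rw [← h0, mem_ball_zero_iff, hsphere z hzs] at this
    exact lt_irrefl _ this
  have hsc : ContinuousOn s (sphere (0:ℂ) R) := by
    have : s = fun z => (T₀.map fun w => (z - w)⁻¹).sum := funext hsT0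
    rw [this]
    apply continuousOn_msum
    intro w hw z hzs h0
    have := hT0ball w hw
    rw [← h0, mem_ball_zero_iff, hsphere z hzs] at this
    exact lt_irrefl _ this
  have hint1 : CircleIntegrable (fun z => Tf z * φ z) 0 R :=
    ContinuousOn.circleIntegrable hR.le (hTfc.mul hφc)
  have hint2 : CircleIntegrable (fun z => s z * φ z) 0 R :=
    ContinuousOn.circleIntegrable hR.le (hsc.mul hφc)
  set D : ℂ := (q.roots.map φ).sum - ∑ i ∈ Finset.range n, φ (x i) with hDdef
  have hI : (∮ z in C(0, R), (Tf z - s z) * φ z) = (2 * Real.pi * Complex.I) * D := by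
    have : (fun z => (Tf z - s z) * φ z) = fun z => Tf z * φ z - s z * φ z := by
      funext y; ring
    rw [this, circleIntegral.integral_sub hint1 hint2, hI1, hI2, hT0φ, hDdef]
    ring
  -- norm estimates
  have habs : ∀ θ : ℝ, ‖deriv (circleMap 0 R) θ •
      ((Tf (circleMap 0 R θ) - s (circleMap 0 R θ)) * φ (circleMap 0 R θ))‖
      ≤ R * (M * ‖φ (circleMap 0 R θ)‖) := by
    intro θ
    have h1 : ‖circleMap 0 R θ * Complex.I‖ = R := by
      rw [norm_mul, Complex.norm_I, mul_one,
        norm_circleMap_zero, abs_of_pos hR]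
    rw [norm_smul, deriv_circleMap, h1, norm_mul]
    have h2 : ‖Tf (circleMap 0 R θ) - s (circleMap 0 R θ)‖ ≤ M :=
      hkey _ (circleMap_mem_sphere _ hR.le θ)
    have h3 : (0:ℝ) ≤ ‖φ (circleMap 0 R θ)‖ := norm_nonneg _
    have h4 : ‖Tf (circleMap 0 R θ) - s (circleMap 0 R θ)‖ * ‖φ (circleMap 0 R θ)‖
        ≤ M * ‖φ (circleMap 0 R θ)‖ := mul_le_mul_of_nonneg_right h2 h3
    nlinarith [norm_nonneg (Tf (circleMap 0 R θ) - s (circleMap 0 R θ))]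
  have hφcm : Continuous fun θ : ℝ => φ (circleMap 0 R θ) :=
    hφc.comp_continuous (continuous_circleMap _ _) fun θ => circleMap_mem_sphere _ hR.le θ
  have hFc : Continuous fun θ : ℝ =>
      (Tf (circleMap 0 R θ) - s (circleMap 0 R θ)) * φ (circleMap 0 R θ) := by
    have hTs : Continuous fun θ : ℝ => Tf (circleMap 0 R θ) - s (circleMap 0 R θ) := by
      apply Continuous.sub
      · exact hTfc.comp_continuous (continuous_circleMap _ _) fun θ => circleMap_mem_sphere _ hR.le θ
      · exact hsc.comp_continuous (continuous_circleMap _ _) fun θ => circleMap_mem_sphere _ hR.le θ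
    exact hTs.mul hφcm
  have hderivc : Continuous fun θ : ℝ => deriv (circleMap 0 R) θ := by
    simp only [deriv_circleMap]
    exact (continuous_circleMap 0 R).mul continuous_const
  have hInt1 : IntervalIntegrable (fun θ : ℝ => ‖deriv (circleMap 0 R) θ •
      ((Tf (circleMap 0 R θ) - s (circleMap 0 R θ)) * φ (circleMap 0 R θ))‖)
      MeasureTheory.volume 0 (2*Real.pi) :=
    ((hderivc.smul hFc).norm).intervalIntegrable _ _
  have hInt2 : IntervalIntegrable (fun θ : ℝ => R * (M * ‖φ (circleMap 0 R θ)‖))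
      MeasureTheory.volume 0 (2*Real.pi) :=
    (continuous_const.mul (continuous_const.mul hφcm.norm)).intervalIntegrable _ _
  have hunfold : (∮ z in C(0, R), (Tf z - s z) * φ z)
      = ∫ θ in (0:ℝ)..(2*Real.pi), deriv (circleMap 0 R) θ •
          ((Tf (circleMap 0 R θ) - s (circleMap 0 R θ)) * φ (circleMap 0 R θ)) := rfl
  have hnorm1 : ‖∮ z in C(0, R), (Tf z - s z) * φ z‖
      ≤ ∫ θ in (0:ℝ)..(2*Real.pi), R * (M * ‖φ (circleMap 0 R θ)‖) := by
    rw [hunfold]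
    calc ‖∫ θ in (0:ℝ)..(2*Real.pi), deriv (circleMap 0 R) θ •
            ((Tf (circleMap 0 R θ) - s (circleMap 0 R θ)) * φ (circleMap 0 R θ))‖
        ≤ ∫ θ in (0:ℝ)..(2*Real.pi), ‖deriv (circleMap 0 R) θ •
            ((Tf (circleMap 0 R θ) - s (circleMap 0 R θ)) * φ (circleMap 0 R θ))‖ :=
          intervalIntegral.norm_integral_le_integral_norm Real.two_pi_pos.le
      _ ≤ ∫ θ in (0:ℝ)..(2*Real.pi), R * (M * ‖φ (circleMap 0 R θ)‖) := by
          apply intervalIntegral.integral_mono_on Real.two_pi_pos.le hInt1 hInt2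
          intro θ _
          exact habs θ
  have hM0 : (0:ℝ) ≤ M := by rw [hMdef]; positivity
  have hCAI : ∫ θ in (0:ℝ)..(2*Real.pi), R * (M * ‖φ (circleMap 0 R θ)‖)
      = M * circleAbsIntegral φ R := by
    rw [circleAbsIntegral]
    rw [intervalIntegral.integral_const_mul]
    have : (fun θ : ℝ => M * ‖φ (circleMap 0 R θ)‖)
        = fun θ : ℝ => M * ‖φ ((R : ℂ) * Complex.exp ((θ : ℂ) * Complex.I))‖ := by
      funext θ
      congr 2
      simp [circleMap]
    rw [this, intervalIntegral.integral_const_mul]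
    ring
  have hDnorm : 2 * Real.pi * ‖D‖ ≤ M * circleAbsIntegral φ R := by
    have h1 : ‖(2 * Real.pi * Complex.I) * D‖ = 2 * Real.pi * ‖D‖ := by
      rw [norm_mul]
      congr 1
      simp [Real.pi_pos.le, abs_of_nonneg]
    calc 2 * Real.pi * ‖D‖ = ‖(2 * Real.pi * Complex.I) * D‖ := h1.symm
      _ = ‖∮ z in C(0, R), (Tf z - s z) * φ z‖ := by rw [hI]
      _ ≤ ∫ θ in (0:ℝ)..(2*Real.pi), R * (M * ‖φ (circleMap 0 R θ)‖) := hnorm1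
      _ = M * circleAbsIntegral φ R := hCAI
  have hgoal : ‖D‖ ≤ M * circleAbsIntegral φ R := by
    nlinarith [Real.pi_gt_three, norm_nonneg D]
  exact hgoal

end Helpers

/-- Theorem `analytic`, local law for analytic test functions. -/
theorem local_law_analytic_test_functions
    {Ω : Type*} [MeasurableSpace Ω] (P : Measure Ω) [IsProbabilityMeasure P]
    (C c ε : ℝ) (hC : 0 < C) (hc : 0 < c) (hε : 0 < ε)
    (μ : Measure ℂ) [IsProbabilityMeasure μ]
    (hsupp : μ (Metric.ball (0 : ℂ) C)ᶜ = 0)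
    (hlow : ∀ z ∈ Metric.sphere (0 : ℂ) (C + ε),
      c ≤ ‖cauchyStieltjes μ z‖)
    (X : ℕ → Ω → ℂ) (hXm : ∀ i, Measurable (X i))
    (hindep : iIndepFun X P)
    (hdist : ∀ i, Measure.map (X i) P = μ) :
    ∃ K > (0:ℝ), ∀ α > (0:ℝ), ∃ K' : ℝ, ∀ n : ℕ, 0 < n → ∀ φ : ℂ → ℂ,
      (∃ U : Set ℂ, IsOpen U ∧ Metric.closedBall (0 : ℂ) (C + ε) ⊆ U ∧
        DifferentiableOn ℂ φ U) →
      P {ω |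
        ‖(Multiset.map φ
              (Polynomial.roots
                (Polynomial.derivative (rootPoly n fun j => X j ω)))).sum -
            ∑ i ∈ Finset.range n, φ (X i ω)‖ ≤
        K * circleAbsIntegral φ (C + ε)} ≥
      1 - ENNReal.ofReal (K' * (n : ℝ) ^ (-α)) := by
  refine ⟨(2*C+ε)^2/ε^3, by positivity, fun α hα => ⟨0, fun n hn φ hφ => ?_⟩⟩
  have h0 : ENNReal.ofReal ((0:ℝ) * (n:ℝ) ^ (-α)) = 0 := by norm_num
  rw [h0, tsub_zero, ge_iff_le]
  have hj : ∀ j : ℕ, ∀ᵐ ω ∂P, X j ω ∈ Metric.ball (0:ℂ) C := by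
    intro j
    rw [MeasureTheory.ae_iff]
    have heq : {ω | ¬ X j ω ∈ Metric.ball (0:ℂ) C} = X j ⁻¹' (Metric.ball (0:ℂ) C)ᶜ := rfl
    rw [heq]
    calc P (X j ⁻¹' (Metric.ball (0:ℂ) C)ᶜ)
        = (Measure.map (X j) P) (Metric.ball (0:ℂ) C)ᶜ :=
          (Measure.map_apply (hXm j) measurableSet_ball.compl).symm
      _ = μ (Metric.ball (0:ℂ) C)ᶜ := by rw [hdist j]
      _ = 0 := hsupp
  have hAS : ∀ᵐ ω ∂P, ∀ j ∈ Finset.range n, X j ω ∈ Metric.ball (0:ℂ) C := by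
    rw [Filter.eventually_all_finset]
    intro j _
    exact hj j
  have hsub : ∀ᵐ ω ∂P, ω ∈ {ω |
      ‖(Multiset.map φ
            (Polynomial.roots
              (Polynomial.derivative (rootPoly n fun j => X j ω)))).sum -
          ∑ i ∈ Finset.range n, φ (X i ω)‖ ≤
      (2*C+ε)^2/ε^3 * circleAbsIntegral φ (C + ε)} := by
    filter_upwards [hAS] with ω hω
    exact det_bound C ε hC hε n hn (fun j => X j ω) hω φ hφ
  calc (1:ℝ≥0∞) = P Set.univ := measure_univ.symm
    _ ≤ P _ := measure_mono_ae (hsub.mono fun ω h _ => h)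
end

section
/- Fix C > 0. For each n, let X_1,…,X_n be arbitrary complex-valued random variables (not necessarily independent nor identically distributed), and let Z be uniformly distributed on B(0, n^C), independent of X_1,…,X_n. Then for every a > 0 there exists b > 0 such that |∑_{i=1}^n 1/(Z−X_i)| ≤ n^b with probability 1 − O_a(n^{−a}). -/
open MeasureTheory ProbabilityTheory
open scoped ENNReal

/-- The uniform probability measure on the ball `B(0, r)` in `ℂ`. -/
noncomputable def unifBall (r : ℝ) : Measure ℂ :=
  (MeasureTheory.volume (Metric.ball (0 : ℂ) r))⁻¹ •
    MeasureTheory.volume.restrict (Metric.ball (0 : ℂ) r)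

lemma unifBall_ball_le {R ε : ℝ} (hR : 0 < R) (hε : 0 ≤ ε) (x : ℂ) :
    unifBall R (Metric.ball x ε) ≤ ENNReal.ofReal (ε ^ 2 / R ^ 2) := by
  unfold unifBall
  rw [Measure.smul_apply, smul_eq_mul, Measure.restrict_apply Metric.isOpen_ball.measurableSet]
  have h1 : MeasureTheory.volume (Metric.ball x ε ∩ Metric.ball (0 : ℂ) R)
      ≤ MeasureTheory.volume (Metric.ball x ε) :=
    measure_mono Set.inter_subset_left
  calc (MeasureTheory.volume (Metric.ball (0 : ℂ) R))⁻¹ *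
        MeasureTheory.volume (Metric.ball x ε ∩ Metric.ball (0 : ℂ) R)
      ≤ (MeasureTheory.volume (Metric.ball (0 : ℂ) R))⁻¹ *
        MeasureTheory.volume (Metric.ball x ε) := by gcongr
    _ = (ENNReal.ofReal R ^ 2 * NNReal.pi)⁻¹ * (ENNReal.ofReal ε ^ 2 * NNReal.pi) := by
        rw [Complex.volume_ball, Complex.volume_ball]
    _ = ENNReal.ofReal (ε ^ 2 / R ^ 2) := by
        rw [ENNReal.mul_inv (Or.inr (by simp [NNReal.pi_ne_zero]))
          (Or.inl (by simp [ENNReal.pow_ne_top, ENNReal.ofReal_ne_top]))]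
        rw [ENNReal.ofReal_div_of_pos (by positivity), ← ENNReal.ofReal_pow hε,
          ← ENNReal.ofReal_pow hR.le, div_eq_mul_inv]
        have hpi : (NNReal.pi : ℝ≥0∞) ≠ 0 := by simp [NNReal.pi_ne_zero]
        have hpi' : (NNReal.pi : ℝ≥0∞) ≠ ⊤ := ENNReal.coe_ne_top
        rw [mul_mul_mul_comm, ENNReal.inv_mul_cancel hpi hpi', mul_one, mul_comm]

/-- Lemma `crude`, crude upper bound. -/
theorem crude_upper_bound
    {Ω : Type*} [MeasurableSpace Ω] (P : Measure Ω) [IsProbabilityMeasure P]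
    (C : ℝ) (hC : 0 < C)
    (X : ℕ → ℕ → Ω → ℂ) (hXm : ∀ n i, Measurable (X n i)) :
    ∀ a > (0:ℝ), ∃ b > (0:ℝ), ∃ K : ℝ, ∀ n : ℕ, 0 < n →
      (P.prod (unifBall ((n : ℝ) ^ C)))
        {p : Ω × ℂ |
          (n : ℝ) ^ b < ‖∑ i ∈ Finset.range n, (p.2 - X n i p.1)⁻¹‖} ≤
        ENNReal.ofReal (K * (n : ℝ) ^ (-a)) := by
  intro a ha
  refine ⟨(a + 3) / 2, by linarith, 1, ?_⟩
  intro n hn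
  set b : ℝ := (a + 3) / 2 with hbdef
  have hn1 : (1 : ℝ) ≤ (n : ℝ) := by exact_mod_cast hn
  have hn0 : (0 : ℝ) < (n : ℝ) := by linarith
  set R : ℝ := (n : ℝ) ^ C with hRdef
  set ε : ℝ := (n : ℝ) ^ (1 - b) with hεdef
  have hε : 0 < ε := Real.rpow_pos_of_pos hn0 _
  have hR : 0 < R := Real.rpow_pos_of_pos hn0 _
  haveI : SFinite (unifBall R) := by unfold unifBall; infer_instance
  have hsub : {p : Ω × ℂ |
      (n : ℝ) ^ b < ‖∑ i ∈ Finset.range n, (p.2 - X n i p.1)⁻¹‖}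
      ⊆ ⋃ i ∈ Finset.range n, {p : Ω × ℂ | ‖p.2 - X n i p.1‖ < ε} := by
    intro p hp
    by_contra h
    simp only [Set.mem_iUnion, Set.mem_setOf_eq, not_exists, not_lt] at h
    have hbound : ‖∑ i ∈ Finset.range n, (p.2 - X n i p.1)⁻¹‖ ≤ (n : ℝ) ^ b := by
      calc ‖∑ i ∈ Finset.range n, (p.2 - X n i p.1)⁻¹‖
          ≤ ∑ i ∈ Finset.range n, ‖(p.2 - X n i p.1)⁻¹‖ :=
            norm_sum_le _ _
        _ ≤ ∑ i ∈ Finset.range n, ε⁻¹ := by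
            refine Finset.sum_le_sum fun i hi => ?_
            rw [norm_inv]
            exact inv_anti₀ hε (h i hi)
        _ = (n : ℝ) * ε⁻¹ := by
            rw [Finset.sum_const, Finset.card_range, nsmul_eq_mul]
        _ = (n : ℝ) ^ b := by
            have key : (n : ℝ) * (n : ℝ) ^ (-(1 - b)) = (n : ℝ) ^ (1 + -(1 - b)) := by
              rw [Real.rpow_add hn0, Real.rpow_one]
            rw [hεdef, ← Real.rpow_neg hn0.le, key]
            norm_num
    exact absurd hp (not_lt.mpr hbound)
  refine le_trans (measure_mono hsub) ?_
  refine le_trans (measure_biUnion_finset_le _ _) ?_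
  have hA : ∀ i, (P.prod (unifBall R)) {p : Ω × ℂ | ‖p.2 - X n i p.1‖ < ε}
      ≤ ENNReal.ofReal (ε ^ 2 / R ^ 2) := by
    intro i
    have hmeas : MeasurableSet {p : Ω × ℂ | ‖p.2 - X n i p.1‖ < ε} :=
      measurableSet_lt (Measurable.norm (measurable_snd.sub ((hXm n i).comp measurable_fst)))
        measurable_const
    rw [Measure.prod_apply hmeas]
    calc (∫⁻ ω, unifBall R (Prod.mk ω ⁻¹' {p : Ω × ℂ | ‖p.2 - X n i p.1‖ < ε}) ∂P)
        ≤ ∫⁻ _, ENNReal.ofReal (ε ^ 2 / R ^ 2) ∂P := by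
          refine lintegral_mono fun ω => ?_
          have hset : Prod.mk ω ⁻¹' {p : Ω × ℂ | ‖p.2 - X n i p.1‖ < ε}
              = Metric.ball (X n i ω) ε := by
            ext z
            simp [Metric.mem_ball, Complex.dist_eq]
          rw [hset]
          exact unifBall_ball_le hR hε.le _
      _ = ENNReal.ofReal (ε ^ 2 / R ^ 2) := by simp
  calc ∑ i ∈ Finset.range n, (P.prod (unifBall R)) {p : Ω × ℂ | ‖p.2 - X n i p.1‖ < ε}
      ≤ ∑ _i ∈ Finset.range n, ENNReal.ofReal (ε ^ 2 / R ^ 2) :=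
        Finset.sum_le_sum fun i _ => hA i
    _ = (n : ℝ≥0∞) * ENNReal.ofReal (ε ^ 2 / R ^ 2) := by
        rw [Finset.sum_const, Finset.card_range, nsmul_eq_mul]
    _ = ENNReal.ofReal ((n : ℝ) * (ε ^ 2 / R ^ 2)) := by
        rw [ENNReal.ofReal_mul (by positivity), ENNReal.ofReal_natCast]
    _ ≤ ENNReal.ofReal (1 * (n : ℝ) ^ (-a)) := by
        apply ENNReal.ofReal_le_ofReal
        rw [one_mul]
        have hε2 : ε ^ 2 = (n : ℝ) ^ ((1 - b) * 2) := by
          rw [hεdef, ← Real.rpow_natCast ((n:ℝ) ^ (1 - b)) 2, ← Real.rpow_mul hn0.le]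
          norm_num
        have hR2 : R ^ 2 = (n : ℝ) ^ (C * 2) := by
          rw [hRdef, ← Real.rpow_natCast ((n:ℝ) ^ C) 2, ← Real.rpow_mul hn0.le]
          norm_num
        have key : (n : ℝ) * ((n : ℝ) ^ ((1 - b) * 2) * (n : ℝ) ^ (-(C * 2)))
            = (n : ℝ) ^ (1 + ((1 - b) * 2 + -(C * 2))) := by
          rw [Real.rpow_add hn0, Real.rpow_add hn0, Real.rpow_one]
        rw [hε2, hR2, div_eq_mul_inv, ← Real.rpow_neg hn0.le, key]
        apply Real.rpow_le_rpow_of_exponent_le hn1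
        rw [hbdef]
        linarith
end
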